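/- arXiv:1704.07586 — 3 statements merged into one kernel-verified Lean document; each statement's English description precedes it below -/
import Mathlib

section
/- Let κ be a symmetric bilinear form on ℂ² with nonzero determinant (equivalently κ_{AB}κ^{AB} ≠ 0, where indices are raised with the symplectic form ε). Then there exist vectors o, ι ∈ ℂ² with ε(o, ι) = 1 and a nonzero scalar c ∈ ℂ such that κ(u, v) = c · (o(u)ι(v) + ι(u)o(v))/2 for all u, v, where o, ι are identified with their ε-duals. In other words, κ_{AB} = c · o_{(A}ι_{B)} in an adapted normalized spin dyad. -/
open Matrix

noncomputable section

/-- The spinor epsilon `ε_{AB}`. -/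
def eps : Matrix (Fin 2) (Fin 2) ℂ := !![0, 1; -1, 0]

/-- The symplectic pairing `ε(u, v) = u^A ε_{AB} v^B`; equivalently, the ε-dual
covector of `u` applied to `v`. -/
def epsPair (u v : Fin 2 → ℂ) : ℂ := ∑ a, ∑ b, u a * eps a b * v b

/-- The bilinear form with component matrix `κ_{AB}` applied to two vectors. -/
def bil (κ : Matrix (Fin 2) (Fin 2) ℂ) (u v : Fin 2 → ℂ) : ℂ :=
  ∑ a, ∑ b, u a * κ a b * v b

lemma epsPair_eval (u v : Fin 2 → ℂ) : epsPair u v = u 0 * v 1 - u 1 * v 0 := by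
  simp [epsPair, eps, Fin.sum_univ_two]
  ring

lemma bil_eval (κ : Matrix (Fin 2) (Fin 2) ℂ) (u v : Fin 2 → ℂ) :
    bil κ u v = u 0 * κ 0 0 * v 0 + u 0 * κ 0 1 * v 1 + u 1 * κ 1 0 * v 0
      + u 1 * κ 1 1 * v 1 := by
  simp [bil, Fin.sum_univ_two]
  ring

lemma key_lemma (κ : Matrix (Fin 2) (Fin 2) ℂ) (α β : Fin 2 → ℂ) (w : ℂ)
    (hw : α 0 * β 1 - α 1 * β 0 = w) (hw0 : w ≠ 0)
    (hκ : ∀ a b, κ a b = (α a * β b + β a * α b) / 2) :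
    ∃ o ι : Fin 2 → ℂ, ∃ c : ℂ, c ≠ 0 ∧ epsPair o ι = 1 ∧
      ∀ u v : Fin 2 → ℂ,
        bil κ u v = c * (epsPair o u * epsPair ι v + epsPair ι u * epsPair o v) / 2 := by
  refine ⟨![α 1, -α 0], ![β 1 / w, -(β 0 / w)], w, hw0, ?_, ?_⟩
  · rw [epsPair_eval]
    simp only [Matrix.cons_val_zero, Matrix.cons_val_one, Matrix.head_cons]
    field_simp
    linear_combination hw
  · intro u v
    rw [bil_eval, hκ, hκ, hκ, hκ, epsPair_eval, epsPair_eval, epsPair_eval, epsPair_eval]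
    simp only [Matrix.cons_val_zero, Matrix.cons_val_one, Matrix.head_cons]
    field_simp
    ring

/-- A symmetric bilinear form `κ` on `ℂ²` with nonzero determinant (i.e. `κ_{AB}κ^{AB} ≠ 0`)
admits a normalized spin dyad `o, ι` with `ε(o,ι) = 1` and a nonzero scalar `c` such that
`κ_{AB} = c · o_{(A} ι_{B)}`, the covectors being the ε-duals of `o` and `ι`. -/
theorem typeD_killing_spinor_normal_form (κ : Matrix (Fin 2) (Fin 2) ℂ)
    (hsym : κᵀ = κ) (hdet : κ.det ≠ 0) :
    ∃ o ι : Fin 2 → ℂ, ∃ c : ℂ, c ≠ 0 ∧ epsPair o ι = 1 ∧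
      ∀ u v : Fin 2 → ℂ,
        bil κ u v = c * (epsPair o u * epsPair ι v + epsPair ι u * epsPair o v) / 2 := by
  set a := κ 0 0 with ha
  set b := κ 0 1 with hb
  set d := κ 1 1 with hd
  have hba : κ 1 0 = b := by
    conv_lhs => rw [← hsym]
    rfl
  clear_value a b d
  have hdet' : a * d - b * b ≠ 0 := by
    rw [Matrix.det_fin_two, hba, ← ha, ← hb, ← hd] at hdet
    exact hdet
  by_cases haz : a = 0
  · -- κ = !![0,b;b,d], b ≠ 0
    have hbz : b ≠ 0 := by
      intro h; apply hdet'; rw [haz, h]; ring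
    refine key_lemma κ ![0, 1] ![2 * b, d] (-2 * b) ?_ ?_ ?_
    · simp
    · simpa using hbz
    · intro i j
      fin_cases i <;> fin_cases j <;>
        simp [← ha, ← hb, ← hd, hba, haz]
  · obtain ⟨δ, hδ⟩ := IsAlgClosed.exists_pow_nat_eq (k := ℂ) (b ^ 2 - a * d) (n := 2)
      (by norm_num)
    have hδ0 : δ ≠ 0 := by
      intro h
      apply hdet'
      rw [h] at hδ
      have : b ^ 2 - a * d = 0 := by rw [← hδ]; ring
      linear_combination -this
    have h1 : (b - δ) / a * a = b - δ := div_mul_cancel₀ _ haz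
    have h2 : a / a = 1 := div_self haz
    refine key_lemma κ ![a, b + δ] (fun j => ![a, b - δ] j / a) (-2 * δ) ?_ ?_ ?_
    · show a * ((b - δ) / a) - (b + δ) * (a / a) = -2 * δ
      rw [mul_comm a, h1, h2]
      ring
    · simpa using hδ0
    · have hpoly : ∀ i j, a * κ i j =
          (![a, b + δ] i * ![a, b - δ] j + ![a, b - δ] i * ![a, b + δ] j) / 2 := by
        have e00 : a * κ 0 0 = (a * a + a * a) / 2 := by rw [← ha]; ring
        have e01 : a * κ 0 1 = (a * (b - δ) + a * (b + δ)) / 2 := by rw [← hb]; ring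
        have e10 : a * κ 1 0 = ((b + δ) * a + (b - δ) * a) / 2 := by rw [hba]; ring
        have e11 : a * κ 1 1 = ((b + δ) * (b - δ) + (b - δ) * (b + δ)) / 2 := by
          rw [← hd]; linear_combination hδ
        intro i j
        fin_cases i <;> fin_cases j <;>
          simp only [Fin.mk_zero, Fin.mk_one, Matrix.cons_val_zero, Matrix.cons_val_one,
            Matrix.head_cons] <;>
          assumption
      intro i j
      have h3 := hpoly i j
      have h4 : κ i j = a * κ i j / a := (mul_div_cancel_left₀ _ haz).symm
      rw [h4, h3]
      ring
end
end

section
/- Let o ∈ ℂ² be nonzero, let κ_{AB} = o_A o_B, and let Ψ_{ABCD} be a totally symmetric 4-linear form on ℂ². If κ_{(A}{}^F Ψ_{BCD)F} = 0 (total symmetrization over A,B,C,D with F contracted via the symplectic form ε), then there exists ψ ∈ ℂ such that Ψ_{ABCD} = ψ · o_A o_B o_C o_D; i.e., Ψ is of Petrov type N with repeated principal spinor o. -/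
open Matrix

noncomputable section

set_option maxRecDepth 40000

/-- The ε-dual covector `u_A = u^B ε_{BA}` of a vector `u`. -/
def lower (u : Fin 2 → ℂ) (a : Fin 2) : ℂ := ∑ b, u b * eps b a

/-- Total symmetrization of a 4-linear form. -/
def sym4 (T : Fin 2 → Fin 2 → Fin 2 → Fin 2 → ℂ) (a b c d : Fin 2) : ℂ :=
  (∑ σ : Equiv.Perm (Fin 4),
      (fun x : Fin 4 → Fin 2 => T (x 0) (x 1) (x 2) (x 3)) (![a, b, c, d] ∘ σ)) / 24

theorem sym4_expand (T : Fin 2 → Fin 2 → Fin 2 → Fin 2 → ℂ) (a b c d : Fin 2) :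
    sym4 T a b c d * 24 =
      T a b c d + T a b d c + T a c b d + T a c d b + T a d b c + T a d c b
    + T b a c d + T b a d c + T b c a d + T b c d a + T b d a c + T b d c a
    + T c a b d + T c a d b + T c b a d + T c b d a + T c d a b + T c d b a
    + T d a b c + T d a c b + T d b a c + T d b c a + T d c a b + T d c b a := by
  rw [sym4]
  simp only [← Equiv.Perm.decomposeFin.symm.sum_comp, Fintype.sum_prod_type]
  simp only [Fin.sum_univ_succ, Finset.univ_unique, Finset.sum_singleton, Function.comp_apply,
    show (1:Fin 4) = Fin.succ 0 from rfl, show (2:Fin 4) = Fin.succ 1 from rfl,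
    show (3:Fin 4) = Fin.succ 2 from rfl, show (1:Fin 3) = Fin.succ 0 from rfl,
    show (2:Fin 3) = Fin.succ 1 from rfl, show (1:Fin 2) = Fin.succ 0 from rfl,
    Equiv.Perm.decomposeFin_symm_apply_zero, Equiv.Perm.decomposeFin_symm_apply_succ]
  norm_num [Equiv.swap_apply_def, Fin.ext_iff]
  simp only [Matrix.cons_val]
  ring

/-- Buchdahl constraint in the degenerate (type N) case: if `κ_{AB} = o_A o_B` with
`o ≠ 0` and `Ψ_{ABCD}` is totally symmetric with `κ_{(A}{}^F Ψ_{BCD)F} = 0`, then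
`Ψ_{ABCD} = ψ · o_A o_B o_C o_D` for some scalar `ψ`. -/
theorem buchdahl_typeN (o : Fin 2 → ℂ) (ho : o ≠ 0)
    (κ : Fin 2 → Fin 2 → ℂ) (hκ : ∀ a b, κ a b = lower o a * lower o b)
    (Ψ : Fin 2 → Fin 2 → Fin 2 → Fin 2 → ℂ)
    (hΨ₁ : ∀ a b c d, Ψ a b c d = Ψ b a c d)
    (hΨ₂ : ∀ a b c d, Ψ a b c d = Ψ a c b d)
    (hΨ₃ : ∀ a b c d, Ψ a b c d = Ψ a b d c)
    (hBuchdahl : ∀ a b c d,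
      sym4 (fun a b c d => ∑ f, ∑ e, eps f e * κ a e * Ψ b c d f) a b c d = 0) :
    ∃ ψ : ℂ, ∀ a b c d, Ψ a b c d =
      ψ * (lower o a * lower o b * lower o c * lower o d) := by
  have hl0 : lower o 0 = -o 1 := by simp [lower, eps, Fin.sum_univ_two]
  have hl1 : lower o 1 = o 0 := by simp [lower, eps, Fin.sum_univ_two]
  have r1 : ∀ c d, Ψ 1 0 c d = Ψ 0 1 c d := fun c d => hΨ₁ 1 0 c d
  have r2 : ∀ a d, Ψ a 1 0 d = Ψ a 0 1 d := fun a d => hΨ₂ a 1 0 d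
  have r3 : ∀ a b, Ψ a b 1 0 = Ψ a b 0 1 := fun a b => hΨ₃ a b 1 0
  have Tval : ∀ a b c d : Fin 2, (∑ f, ∑ e, eps f e * κ a e * Ψ b c d f)
      = lower o a * (o 0 * Ψ b c d 0 + o 1 * Ψ b c d 1) := by
    intro a b c d
    simp [Fin.sum_univ_two, hκ, eps, hl0, hl1]
    ring
  have e0 := sym4_expand (fun a b c d => ∑ f, ∑ e, eps f e * κ a e * Ψ b c d f) 0 0 0 0
  have e1 := sym4_expand (fun a b c d => ∑ f, ∑ e, eps f e * κ a e * Ψ b c d f) 0 0 0 1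
  have e2 := sym4_expand (fun a b c d => ∑ f, ∑ e, eps f e * κ a e * Ψ b c d f) 0 0 1 1
  have e3 := sym4_expand (fun a b c d => ∑ f, ∑ e, eps f e * κ a e * Ψ b c d f) 0 1 1 1
  have e4 := sym4_expand (fun a b c d => ∑ f, ∑ e, eps f e * κ a e * Ψ b c d f) 1 1 1 1
  rw [hBuchdahl, zero_mul] at e0 e1 e2 e3 e4
  simp only [Tval, hl0, hl1, r1, r2, r3] at e0 e1 e2 e3 e4
  rcases eq_or_ne (o 0) 0 with hP | hP
  · -- o 0 = 0, so o 1 ≠ 0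
    have hQ : o 1 ≠ 0 := by
      intro h; apply ho; funext i; fin_cases i <;> simp [hP, h]
    have φ0 : o 0 * Ψ 0 0 0 0 + o 1 * Ψ 0 0 0 1 = 0 := by
      have h : o 1 * (o 0 * Ψ 0 0 0 0 + o 1 * Ψ 0 0 0 1) = 0 := by
        linear_combination (1/24 : ℂ) * e0
      exact (mul_eq_zero.mp h).resolve_left hQ
    have φ1 : o 0 * Ψ 0 0 0 1 + o 1 * Ψ 0 0 1 1 = 0 := by
      have h : o 1 * (o 0 * Ψ 0 0 0 1 + o 1 * Ψ 0 0 1 1) = 0 := by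
        linear_combination (1/18 : ℂ) * e1 + (o 0 / 3) * φ0
      exact (mul_eq_zero.mp h).resolve_left hQ
    have φ2 : o 0 * Ψ 0 0 1 1 + o 1 * Ψ 0 1 1 1 = 0 := by
      have h : o 1 * (o 0 * Ψ 0 0 1 1 + o 1 * Ψ 0 1 1 1) = 0 := by
        linear_combination (1/12 : ℂ) * e2 + o 0 * φ1
      exact (mul_eq_zero.mp h).resolve_left hQ
    have φ3 : o 0 * Ψ 0 1 1 1 + o 1 * Ψ 1 1 1 1 = 0 := by
      have h : o 1 * (o 0 * Ψ 0 1 1 1 + o 1 * Ψ 1 1 1 1) = 0 := by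
        linear_combination (1/6 : ℂ) * e3 + 3 * o 0 * φ2
      exact (mul_eq_zero.mp h).resolve_left hQ
    refine ⟨Ψ 0 0 0 0 / (o 1) ^ 4, ?_⟩
    intro a b c d
    fin_cases a <;> fin_cases b <;> fin_cases c <;> fin_cases d <;>
      simp only [Fin.mk_zero, Fin.mk_one, Fin.isValue, r1, r2, r3, hl0, hl1] <;>
      rw [div_mul_eq_mul_div, eq_div_iff (pow_ne_zero 4 hQ)] <;>
      first
        | ring1
        | linear_combination (o 1)^3 * φ0
        | linear_combination (o 1)^3 * φ1 - o 0 * (o 1)^2 * φ0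
        | linear_combination (o 1)^3 * φ2 - o 0 * (o 1)^2 * φ1 + (o 0)^2 * o 1 * φ0
        | linear_combination (o 1)^3 * φ3 - o 0 * (o 1)^2 * φ2 + (o 0)^2 * o 1 * φ1 - (o 0)^3 * φ0
  · have φ3 : o 0 * Ψ 0 1 1 1 + o 1 * Ψ 1 1 1 1 = 0 := by
      have h : o 0 * (o 0 * Ψ 0 1 1 1 + o 1 * Ψ 1 1 1 1) = 0 := by
        linear_combination (-1/24 : ℂ) * e4
      exact (mul_eq_zero.mp h).resolve_left hP
    have φ2 : o 0 * Ψ 0 0 1 1 + o 1 * Ψ 0 1 1 1 = 0 := by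
      have h : o 0 * (o 0 * Ψ 0 0 1 1 + o 1 * Ψ 0 1 1 1) = 0 := by
        linear_combination (-1/18 : ℂ) * e3 + (o 1 / 3) * φ3
      exact (mul_eq_zero.mp h).resolve_left hP
    have φ1 : o 0 * Ψ 0 0 0 1 + o 1 * Ψ 0 0 1 1 = 0 := by
      have h : o 0 * (o 0 * Ψ 0 0 0 1 + o 1 * Ψ 0 0 1 1) = 0 := by
        linear_combination (-1/12 : ℂ) * e2 + o 1 * φ2
      exact (mul_eq_zero.mp h).resolve_left hP
    have φ0 : o 0 * Ψ 0 0 0 0 + o 1 * Ψ 0 0 0 1 = 0 := by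
      have h : o 0 * (o 0 * Ψ 0 0 0 0 + o 1 * Ψ 0 0 0 1) = 0 := by
        linear_combination (-1/6 : ℂ) * e1 + 3 * o 1 * φ1
      exact (mul_eq_zero.mp h).resolve_left hP
    refine ⟨Ψ 1 1 1 1 / (o 0) ^ 4, ?_⟩
    intro a b c d
    fin_cases a <;> fin_cases b <;> fin_cases c <;> fin_cases d <;>
      simp only [Fin.mk_zero, Fin.mk_one, Fin.isValue, r1, r2, r3, hl0, hl1] <;>
      rw [div_mul_eq_mul_div, eq_div_iff (pow_ne_zero 4 hP)] <;>
      first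
        | ring1
        | linear_combination (o 0)^3 * φ3
        | linear_combination (o 0)^3 * φ2 - (o 0)^2 * o 1 * φ3
        | linear_combination (o 0)^3 * φ1 - (o 0)^2 * o 1 * φ2 + o 0 * (o 1)^2 * φ3
        | linear_combination (o 0)^3 * φ0 - (o 0)^2 * o 1 * φ1 + o 0 * (o 1)^2 * φ2 - (o 1)^3 * φ3
end
end

section
/- Let (M, g) be a pseudo-Riemannian manifold with Levi-Civita connection ∇, let Ξ, s : M → ℝ be smooth functions, and let L be a smooth symmetric 2-tensor field on M. Assume the two equations Hess Ξ + Ξ·L = s·g and ds + L(grad Ξ, ·) = 0 hold on M. Then the function Z := −6·Ξ·s + 3·g(grad Ξ, grad Ξ) has vanishing differential, dZ = 0; hence Z is locally constant. -/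
noncomputable section

/-- Conformal Einstein field equations: if `Hess Ξ + Ξ·L = s·g` and
`ds + L(grad Ξ, ·) = 0` hold for a (pseudo-)metric `B`, a symmetric 2-tensor `L` and
functions `Ξ, s`, then `Z := −6 Ξ s + 3 g(grad Ξ, grad Ξ)` has vanishing differential,
hence is locally constant.  Here the metric is modelled by a constant symmetric
bilinear form `B`, `grad Ξ` is the `B`-gradient of `Ξ`, and the covariant Hessian is
`Hess Ξ (u,v) = B(D_u grad Ξ, v)`. -/
theorem conformal_constraint_propagation
    {E : Type*} [NormedAddCommGroup E] [NormedSpace ℝ E]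
    (B : E →L[ℝ] E →L[ℝ] ℝ) (hBsym : ∀ u v, B u v = B v u)
    (Ξ s : E → ℝ) (L : E → E →L[ℝ] E →L[ℝ] ℝ) (gradΞ : E → E)
    (hΞ : Differentiable ℝ Ξ) (hs : Differentiable ℝ s)
    (hgrad : Differentiable ℝ gradΞ)
    (hLsym : ∀ p u v, L p u v = L p v u)
    (hgraddef : ∀ p v, B (gradΞ p) v = fderiv ℝ Ξ p v)
    (heq1 : ∀ p u v, B (fderiv ℝ gradΞ p u) v + Ξ p * L p u v = s p * B u v)
    (heq2 : ∀ p v, fderiv ℝ s p v + L p (gradΞ p) v = 0) :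
    ∀ p, fderiv ℝ (fun q => -6 * Ξ q * s q + 3 * B (gradΞ q) (gradΞ q)) p = 0 := by
  intro p
  have hdΞ := (hΞ p).hasFDerivAt
  have hds := (hs p).hasFDerivAt
  have hdg := (hgrad p).hasFDerivAt
  have hbil : HasFDerivAt (fun q => B (gradΞ q) (gradΞ q))
      ((B.isBoundedBilinearMap.deriv (gradΞ p, gradΞ p)).comp
        ((fderiv ℝ gradΞ p).prod (fderiv ℝ gradΞ p))) p :=
    HasFDerivAt.comp (g := fun x : E × E => B x.1 x.2) p (B.isBoundedBilinearMap.hasFDerivAt (gradΞ p, gradΞ p)) (HasFDerivAt.prodMk hdg hdg)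
  have hfull := ((hdΞ.const_mul (-6 : ℝ)).mul hds).add (hbil.const_mul (3 : ℝ))
  rw [(show HasFDerivAt (fun q => -6 * Ξ q * s q + 3 * B (gradΞ q) (gradΞ q)) _ p from hfull).fderiv]
  ext v
  simp only [ContinuousLinearMap.add_apply, ContinuousLinearMap.smul_apply,
    ContinuousLinearMap.comp_apply, ContinuousLinearMap.prod_apply,
    IsBoundedBilinearMap.deriv_apply, ContinuousLinearMap.zero_apply, smul_eq_mul]
  have h1 : fderiv ℝ Ξ p v = B (gradΞ p) v := (hgraddef p v).symm
  have h2 : fderiv ℝ s p v = -(L p (gradΞ p) v) := by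
    have := heq2 p v; linarith
  have h3 : B (fderiv ℝ gradΞ p v) (gradΞ p)
      = s p * B v (gradΞ p) - Ξ p * L p v (gradΞ p) := by
    have := heq1 p v (gradΞ p); linarith
  have h4 : B (gradΞ p) (fderiv ℝ gradΞ p v) = B (fderiv ℝ gradΞ p v) (gradΞ p) :=
    hBsym _ _
  rw [h1, h2, h4, h3, hBsym v (gradΞ p), hLsym p v (gradΞ p)]
  ring
end
end
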